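/- Let ω_c > 0, τ_c > 0, k ≥ 0 be real numbers, let D₁, D₂, A be real 2×2 matrices and g ∈ ℂ². Assume the complex matrix M = 2iω_c I₂ + τ_c k D₁ + τ_c k e^{−2iω_c} D₂ − τ_c A is invertible, and define h : [−1,0] → ℂ² by h(θ) = e^{2iω_c θ} M^{−1} g. Then h′(θ) = 2iω_c h(θ) for all θ ∈ [−1,0], and h′(0) + τ_c k (D₁ h(0) + D₂ h(−1)) − τ_c A h(0) = g. -/

import Mathlib

open Matrix

/-- The explicit solution of the boundary-value problem for the
second-order center-manifold coefficient: with
`M = 2iω_c I₂ + τ_c k D₁ + τ_c k e^{-2iω_c} D₂ - τ_c A` invertible and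
`h(θ) = e^{2iω_c θ} M⁻¹ g`, we have `h'(θ) = 2iω_c h(θ)` on `[-1,0]` and
`h'(0) + τ_c k (D₁ h(0) + D₂ h(-1)) - τ_c A h(0) = g`. -/
theorem stmt_18 (ωc τc k : ℝ) (hωc : 0 < ωc) (hτc : 0 < τc) (hk : 0 ≤ k)
    (D1 D2 A : Matrix (Fin 2) (Fin 2) ℝ) (g : Fin 2 → ℂ)
    (M : Matrix (Fin 2) (Fin 2) ℂ)
    (hM : M = (2 * (ωc : ℂ) * Complex.I) • (1 : Matrix (Fin 2) (Fin 2) ℂ)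
        + ((τc * k : ℝ) : ℂ) • D1.map Complex.ofReal
        + (((τc * k : ℝ) : ℂ) * Complex.exp (-(2 * (ωc : ℂ) * Complex.I))) •
            D2.map Complex.ofReal
        - ((τc : ℝ) : ℂ) • A.map Complex.ofReal)
    (hMinv : IsUnit M)
    (h : ℝ → Fin 2 → ℂ)
    (hh : ∀ θ : ℝ, h θ = Complex.exp (2 * (ωc : ℂ) * Complex.I * (θ : ℂ)) • (M⁻¹ *ᵥ g)) :
    (∀ θ ∈ Set.Icc (-1 : ℝ) 0, HasDerivAt h ((2 * (ωc : ℂ) * Complex.I) • h θ) θ) ∧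
    deriv h 0 + ((τc * k : ℝ) : ℂ) •
        (D1.map Complex.ofReal *ᵥ h 0 + D2.map Complex.ofReal *ᵥ h (-1))
      - ((τc : ℝ) : ℂ) • (A.map Complex.ofReal *ᵥ h 0) = g := by
  set c : ℂ := 2 * (ωc : ℂ) * Complex.I with hc
  set v : Fin 2 → ℂ := M⁻¹ *ᵥ g with hv
  have hderiv : ∀ θ : ℝ, HasDerivAt h (c • h θ) θ := by
    intro θ
    have h1 : HasDerivAt (fun θ : ℝ => Complex.exp (c * (θ : ℂ)))
        (c * Complex.exp (c * (θ : ℂ))) θ := by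
      have h2 : HasDerivAt (fun z : ℂ => Complex.exp (c * z))
          (c * Complex.exp (c * (θ : ℂ))) (θ : ℂ) := by
        have := ((hasDerivAt_id (θ : ℂ)).const_mul c).cexp
        simpa [mul_comm] using this
      simpa using h2.comp_ofReal
    have := h1.smul_const v
    have heq : (fun θ : ℝ => Complex.exp (c * (θ : ℂ)) • v) = h := by
      funext θ; rw [hh θ]
    rw [heq] at this
    rw [hh θ, smul_smul]
    exact this
  have hd0 : deriv h 0 = c • h 0 := (hderiv 0).deriv
  constructor
  · exact fun θ _ => hderiv θ
  · rw [hd0, hh 0, hh (-1)]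
    simp only [Complex.ofReal_zero, mul_zero, Complex.exp_zero, one_smul,
      Complex.ofReal_neg, Complex.ofReal_one, mul_neg_one]
    have hMv : M *ᵥ v = g := by
      rw [hv, mulVec_mulVec, Matrix.mul_nonsing_inv _ (isUnit_iff_isUnit_det M |>.mp hMinv),
        one_mulVec]
    calc c • v + ((τc * k : ℝ) : ℂ) •
          (D1.map Complex.ofReal *ᵥ v + D2.map Complex.ofReal *ᵥ Complex.exp (-c) • v)
        - ((τc : ℝ) : ℂ) • (A.map Complex.ofReal *ᵥ v) = M *ᵥ v := by
          rw [hM]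
          simp [sub_mulVec, add_mulVec, smul_mulVec, mulVec_smul, smul_smul,
            smul_add, add_assoc]
          constructor <;> ring
      _ = g := hMv
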